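/- Let n ≥ 3 be an odd integer and let Γ be a BCR diagram. Let S1 and S2 be disjoint subsets of V(Γ) with S1 ∪ S2 ≠ V(Γ), and let E' be the set of edges of Γ that do not have both endpoints in S1 and do not have both endpoints in S2. Then n·|V_i(Γ) ∖ (S1 ∪ S2)| + (n+2)·|V_e(Γ) ∖ (S1 ∪ S2)| ≤ (n−1)·|E' ∩ E_i(Γ)| + (n+1)·|E' ∩ E_e(Γ)|, and this inequality is an equality if and only if S1 = ∅ and S2 = ∅. (This is the combinatorial content of the paper's lemma comparing the dimension of the configuration space C_{Γ_{S1,S2}}(ψ_triv) with the sum of the degrees n(e) of the spheres associated to the edges of Γ_{S1,S2}.) -/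
import Mathlib


open Finset

/-- A finite directed graph with a distinguished set of internal vertices `Vi`
and a distinguished set of internal edges `Ei`. Edges are ordered pairs of
vertices, so there are no multiple edges with the same orientation. -/
structure DiGraph (V : Type*) [DecidableEq V] [Fintype V] where
  E : Finset (V × V)
  Vi : Finset V
  Ei : Finset (V × V)

namespace DiGraph

variable {V : Type*} [DecidableEq V] [Fintype V] (G : DiGraph V)

/-- The external edges. -/
def Ee : Finset (V × V) := G.E \ G.Ei

/-- The external vertices. -/
def Ve : Finset V := G.Viᶜ

/-- The edges going out of `v`. -/
def outE (v : V) : Finset (V × V) := G.E.filter fun e => e.1 = v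

/-- The edges coming into `v`. -/
def inE (v : V) : Finset (V × V) := G.E.filter fun e => e.2 = v

/-- The valence of a vertex. -/
def valence (v : V) : ℕ := (G.outE v).card + (G.inE v).card

def Univalent (v : V) : Prop := G.valence v = 1

def Bivalent (v : V) : Prop := G.valence v = 2

def Trivalent (v : V) : Prop := G.valence v = 3

/-- A leg is an external edge whose source is a univalent vertex. -/
def IsLeg (e : V × V) : Prop := e ∈ G.Ee ∧ G.Univalent e.1

/-- `v` is external and trivalent, with two incoming external edges and one
outgoing external edge, and one of the incoming edges comes from a univalent
vertex. -/
def Cond1 (v : V) : Prop :=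
  v ∉ G.Vi ∧
  (∃ e, G.outE v = {e} ∧ e ∈ G.Ee) ∧
  (∃ e f, e ≠ f ∧ G.inE v = {e, f} ∧ e ∈ G.Ee ∧ f ∈ G.Ee) ∧
  (∃ e ∈ G.inE v, G.Univalent e.1)

/-- `v` is internal and trivalent, with one incoming internal edge, one
outgoing internal edge, and one incoming external edge coming from a
univalent vertex. -/
def Cond2 (v : V) : Prop :=
  v ∈ G.Vi ∧
  (∃ e, G.outE v = {e} ∧ e ∈ G.Ei) ∧
  (∃ e f, e ≠ f ∧ G.inE v = {e, f} ∧ e ∈ G.Ei ∧ f ∈ G.Ee ∧ G.Univalent f.1)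

/-- `v` is internal and univalent, with one outgoing external edge. -/
def Cond3 (v : V) : Prop :=
  v ∈ G.Vi ∧ (∃ e, G.outE v = {e} ∧ e ∈ G.Ee) ∧ G.inE v = ∅

/-- `v` is internal and bivalent, with one incoming external edge and one
outgoing internal edge. -/
def Cond4 (v : V) : Prop :=
  v ∈ G.Vi ∧ (∃ e, G.outE v = {e} ∧ e ∈ G.Ei) ∧ (∃ f, G.inE v = {f} ∧ f ∈ G.Ee)

/-- `v` is internal and bivalent, with one incoming internal edge and one
outgoing external edge. -/
def Cond5 (v : V) : Prop :=
  v ∈ G.Vi ∧ (∃ e, G.outE v = {e} ∧ e ∈ G.Ee) ∧ (∃ f, G.inE v = {f} ∧ f ∈ G.Ei)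

/-- The (undirected) adjacency relation of the underlying graph. -/
def Adj (a b : V) : Prop := (a, b) ∈ G.E ∨ (b, a) ∈ G.E

/-- `G` is a BCR diagram: edges join distinct vertices, internal edges are
edges, the underlying graph is connected, and every vertex satisfies one of
the five conditions. -/
def IsBCR : Prop :=
  (∀ e ∈ G.E, e.1 ≠ e.2) ∧
  G.Ei ⊆ G.E ∧
  (∀ v w : V, Relation.ReflTransGen G.Adj v w) ∧
  (∀ v : V, G.Cond1 v ∨ G.Cond2 v ∨ G.Cond3 v ∨ G.Cond4 v ∨ G.Cond5 v)

end DiGraph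

namespace BCRAux

open DiGraph

variable {V : Type*} [DecidableEq V] [Fintype V]

/-- Edge weight. -/
def we (G : DiGraph V) (n : ℤ) (e : V × V) : ℤ := if e ∈ G.Ei then n - 1 else n + 1

/-- Vertex weight. -/
def wv (G : DiGraph V) (n : ℤ) (v : V) : ℤ := if v ∈ G.Vi then n else n + 2

/-- Removed edges. -/
def R (G : DiGraph V) (S1 S2 : Finset V) : Finset (V × V) :=
  G.E.filter fun e => (e.1 ∈ S1 ∧ e.2 ∈ S1) ∨ (e.1 ∈ S2 ∧ e.2 ∈ S2)

def localR (G : DiGraph V) (n : ℤ) (S1 S2 : Finset V) (v : V) : ℤ :=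
  (∑ e ∈ (R G S1 S2).filter (fun e => e.1 = v), we G n e)
  + ∑ e ∈ (R G S1 S2).filter (fun e => e.2 = v), we G n e

def d (G : DiGraph V) (n : ℤ) (S1 S2 : Finset V) (v : V) : ℤ :=
  2 * wv G n v - localR G n S1 S2 v

lemma we_of_Ee {G : DiGraph V} {n : ℤ} {e : V × V} (h : e ∈ G.Ee) : we G n e = n + 1 := by
  rw [DiGraph.Ee, Finset.mem_sdiff] at h
  simp [we, h.2]

lemma we_of_Ei {G : DiGraph V} {n : ℤ} {e : V × V} (h : e ∈ G.Ei) : we G n e = n - 1 := by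
  simp [we, h]

lemma double_sum (F : Finset (V × V)) (f : V × V → ℤ) :
    2 * ∑ e ∈ F, f e
      = ∑ v, ((∑ e ∈ F.filter (fun e => e.1 = v), f e)
          + ∑ e ∈ F.filter (fun e => e.2 = v), f e) := by
  rw [Finset.sum_add_distrib,
    Finset.sum_fiberwise_of_maps_to (g := Prod.fst) (fun x _ => Finset.mem_univ _) f,
    Finset.sum_fiberwise_of_maps_to (g := Prod.snd) (fun x _ => Finset.mem_univ _) f]
  ring

lemma card_sum_eq (F : Finset (V × V)) :
    (∑ v, ((F.filter (fun e => e.1 = v)).card : ℤ))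
      = ∑ v, ((F.filter (fun e => e.2 = v)).card : ℤ) := by
  have h1 : ∑ v, ∑ e ∈ F.filter (fun e => e.1 = v), (1 : ℤ) = ∑ e ∈ F, (1:ℤ) :=
    Finset.sum_fiberwise_of_maps_to (fun x _ => Finset.mem_univ _) _
  have h2 : ∑ v, ∑ e ∈ F.filter (fun e => e.2 = v), (1 : ℤ) = ∑ e ∈ F, (1:ℤ) :=
    Finset.sum_fiberwise_of_maps_to (fun x _ => Finset.mem_univ _) _
  simp only [Finset.sum_const, nsmul_eq_mul, mul_one] at h1 h2
  rw [h1, h2]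

/-- Per-vertex identity for the full edge set. -/
lemma vert_full {G : DiGraph V} (hG : G.IsBCR) (n : ℤ) (v : V) :
    (∑ e ∈ G.outE v, we G n e) + (∑ e ∈ G.inE v, we G n e)
      = 2 * wv G n v + (n - 1) * (((G.inE v).card : ℤ) - ((G.outE v).card : ℤ)) := by
  rcases hG.2.2.2 v with h | h | h | h | h
  · obtain ⟨hvi, ⟨e, hout, he⟩, ⟨a, b, hab, hin, ha, hb⟩, -⟩ := h
    rw [hout, hin, Finset.sum_singleton, Finset.sum_pair hab, we_of_Ee he, we_of_Ee ha,
      we_of_Ee hb, Finset.card_singleton, Finset.card_pair hab]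
    simp only [wv, if_neg hvi]
    ring
  · obtain ⟨hvi, ⟨e, hout, he⟩, ⟨a, b, hab, hin, ha, hb, -⟩⟩ := h
    rw [hout, hin, Finset.sum_singleton, Finset.sum_pair hab, we_of_Ei he, we_of_Ei ha,
      we_of_Ee hb, Finset.card_singleton, Finset.card_pair hab]
    simp only [wv, if_pos hvi]
    ring
  · obtain ⟨hvi, ⟨e, hout, he⟩, hin⟩ := h
    rw [hout, hin, Finset.sum_singleton, Finset.sum_empty, we_of_Ee he,
      Finset.card_singleton, Finset.card_empty]
    simp only [wv, if_pos hvi]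
    ring
  · obtain ⟨hvi, ⟨e, hout, he⟩, ⟨f, hin, hf⟩⟩ := h
    rw [hout, hin, Finset.sum_singleton, Finset.sum_singleton, we_of_Ei he, we_of_Ee hf,
      Finset.card_singleton, Finset.card_singleton]
    simp only [wv, if_pos hvi]
    ring
  · obtain ⟨hvi, ⟨e, hout, he⟩, ⟨f, hin, hf⟩⟩ := h
    rw [hout, hin, Finset.sum_singleton, Finset.sum_singleton, we_of_Ee he, we_of_Ei hf,
      Finset.card_singleton, Finset.card_singleton]
    simp only [wv, if_pos hvi]
    ring

/-- Base identity: total edge weight equals total vertex weight. -/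
lemma base {G : DiGraph V} (hG : G.IsBCR) (n : ℤ) :
    ∑ e ∈ G.E, we G n e = ∑ v, wv G n v := by
  have h := double_sum G.E (we G n)
  have h2 : ∀ v : V, (∑ e ∈ G.E.filter (fun e => e.1 = v), we G n e)
      + ∑ e ∈ G.E.filter (fun e => e.2 = v), we G n e
      = 2 * wv G n v + (n - 1) * (((G.inE v).card : ℤ) - ((G.outE v).card : ℤ)) :=
    fun v => vert_full hG n v
  rw [Finset.sum_congr rfl (fun v _ => h2 v)] at h
  rw [Finset.sum_add_distrib] at h
  have h3 : ∑ v : V, (n - 1) * (((G.inE v).card : ℤ) - ((G.outE v).card : ℤ)) = 0 := by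
    rw [← Finset.mul_sum]
    have := card_sum_eq (V := V) G.E
    simp only [Finset.sum_sub_distrib]
    simp only [DiGraph.inE, DiGraph.outE] at *
    rw [this]
    simp
  rw [h3, add_zero, ← Finset.mul_sum] at h
  linarith

end BCRAux
namespace BCRAux

open DiGraph

variable {V : Type*} [DecidableEq V] [Fintype V]

lemma filterR_out (G : DiGraph V) (S1 S2 : Finset V) (v : V) :
    (R G S1 S2).filter (fun e => e.1 = v) = (G.outE v).filter (fun e => e ∈ R G S1 S2) := by
  ext e
  simp only [R, DiGraph.outE, Finset.mem_filter]
  tauto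

lemma filterR_in (G : DiGraph V) (S1 S2 : Finset V) (v : V) :
    (R G S1 S2).filter (fun e => e.2 = v) = (G.inE v).filter (fun e => e ∈ R G S1 S2) := by
  ext e
  simp only [R, DiGraph.inE, Finset.mem_filter]
  tauto

lemma localR_eq (G : DiGraph V) (n : ℤ) (S1 S2 : Finset V) (v : V) :
    localR G n S1 S2 v
      = (∑ e ∈ G.outE v, if e ∈ R G S1 S2 then we G n e else 0)
        + ∑ e ∈ G.inE v, if e ∈ R G S1 S2 then we G n e else 0 := by
  rw [localR, filterR_out, filterR_in, Finset.sum_filter, Finset.sum_filter]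

lemma mem_outE_of_R {G : DiGraph V} {S1 S2 : Finset V} {u w : V} (h : (u, w) ∈ R G S1 S2) :
    (u, w) ∈ G.outE u := by
  rw [R, Finset.mem_filter] at h
  simp [DiGraph.outE, h.1]

lemma endpoints_mem {G : DiGraph V} {S1 S2 : Finset V} {e : V × V}
    (h : e ∈ R G S1 S2) : e.1 ∈ S1 ∪ S2 ∧ e.2 ∈ S1 ∪ S2 := by
  rw [R, Finset.mem_filter] at h
  rcases h.2 with ⟨h1, h2⟩ | ⟨h1, h2⟩ <;> simp [h1, h2]

/-- Every vertex of a BCR diagram has a unique outgoing edge. -/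
lemma out_singleton {G : DiGraph V} (hG : G.IsBCR) (v : V) :
    ∃ e, G.outE v = {e} := by
  rcases hG.2.2.2 v with h | h | h | h | h
  · exact ⟨h.2.1.choose, h.2.1.choose_spec.1⟩
  · exact ⟨h.2.1.choose, h.2.1.choose_spec.1⟩
  · exact ⟨h.2.1.choose, h.2.1.choose_spec.1⟩
  · exact ⟨h.2.1.choose, h.2.1.choose_spec.1⟩
  · exact ⟨h.2.1.choose, h.2.1.choose_spec.1⟩

/-- Structure of a univalent vertex: it satisfies Cond3. -/
lemma univalent_struct {G : DiGraph V} (hG : G.IsBCR) {u : V} (h : G.Univalent u) :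
    u ∈ G.Vi ∧ ∃ e, G.outE u = {e} ∧ e ∈ G.Ee ∧ G.inE u = ∅ := by
  rw [DiGraph.Univalent, DiGraph.valence] at h
  rcases hG.2.2.2 u with hc | hc | hc | hc | hc
  · obtain ⟨-, ⟨e, hout, -⟩, ⟨a, b, hab, hin, -⟩, -⟩ := hc
    rw [hout, hin, Finset.card_singleton, Finset.card_pair hab] at h
    omega
  · obtain ⟨-, ⟨e, hout, -⟩, ⟨a, b, hab, hin, -⟩⟩ := hc
    rw [hout, hin, Finset.card_singleton, Finset.card_pair hab] at h
    omega
  · obtain ⟨hvi, ⟨e, hout, he⟩, hin⟩ := hc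
    exact ⟨hvi, e, hout, he, hin⟩
  · obtain ⟨-, ⟨e, hout, -⟩, ⟨f, hin, -⟩⟩ := hc
    rw [hout, hin, Finset.card_singleton, Finset.card_singleton] at h
    omega
  · obtain ⟨-, ⟨e, hout, -⟩, ⟨f, hin, -⟩⟩ := hc
    rw [hout, hin, Finset.card_singleton, Finset.card_singleton] at h
    omega

/-- The main per-vertex classification lemma. -/
lemma vert_bounds {G : DiGraph V} (hG : G.IsBCR) {n : ℤ} (hn : 3 ≤ n)
    (S1 S2 : Finset V) (v : V) :
    -(n - 1) ≤ d G n S1 S2 v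
    ∧ (d G n S1 S2 v < 0 →
        (G.outE v ⊆ R G S1 S2 ∧ G.inE v ⊆ R G S1 S2)
          ∧ ∃ u, G.Univalent u ∧ (u, v) ∈ R G S1 S2)
    ∧ (d G n S1 S2 v = 0 →
        (G.outE v ⊆ R G S1 S2 ∧ G.inE v ⊆ R G S1 S2)
          ∨ ∃ u, G.Univalent u ∧ (u, v) ∈ R G S1 S2) := by
  have hloc := localR_eq G n S1 S2 v
  rcases hG.2.2.2 v with h | h | h | h | h
  · -- Cond1
    obtain ⟨hvi, ⟨e, hout, he⟩, ⟨a, b, hab, hin, ha, hb⟩, ⟨g, hg, hgu⟩⟩ := h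
    rw [hout, hin, Finset.sum_singleton, Finset.sum_pair hab,
      we_of_Ee he, we_of_Ee ha, we_of_Ee hb] at hloc
    have hwv : wv G n v = n + 2 := if_neg hvi
    have hg2 : g.2 = v := by
      have := hg; rw [DiGraph.inE, Finset.mem_filter] at this; exact this.2
    have hgab : g = a ∨ g = b := by rw [hin] at hg; simpa using hg
    have hd : d G n S1 S2 v = 2 * (n + 2)
        - ((if e ∈ R G S1 S2 then n + 1 else 0)
          + ((if a ∈ R G S1 S2 then n + 1 else 0)
            + (if b ∈ R G S1 S2 then n + 1 else 0))) := by
      rw [d, hloc, hwv]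
    refine ⟨?_, ?_, ?_⟩
    · rw [hd]; split_ifs <;> omega
    · intro hneg
      rw [hd] at hneg
      by_cases h1 : e ∈ R G S1 S2 <;> by_cases h2 : a ∈ R G S1 S2 <;>
        by_cases h3 : b ∈ R G S1 S2 <;> simp only [h1, h2, h3, if_true, if_false,
          if_pos, if_neg, not_false_iff] at hneg <;> try omega
      refine ⟨⟨?_, ?_⟩, g.1, hgu, ?_⟩
      · rw [hout]; exact Finset.singleton_subset_iff.2 h1
      · rw [hin]; exact Finset.insert_subset_iff.2 ⟨h2, Finset.singleton_subset_iff.2 h3⟩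
      · have : (g.1, v) = g := by rw [← hg2]
        rw [this]
        rcases hgab with rfl | rfl
        · exact h2
        · exact h3
    · intro hzero
      rw [hd] at hzero
      by_cases h1 : e ∈ R G S1 S2 <;> by_cases h2 : a ∈ R G S1 S2 <;>
        by_cases h3 : b ∈ R G S1 S2 <;> simp only [h1, h2, h3, if_true, if_false,
          if_pos, if_neg, not_false_iff] at hzero <;> omega
  · -- Cond2
    obtain ⟨hvi, ⟨e, hout, he⟩, ⟨a, f, haf, hin, ha, hf, hfu⟩⟩ := h
    rw [hout, hin, Finset.sum_singleton, Finset.sum_pair haf,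
      we_of_Ei he, we_of_Ei ha, we_of_Ee hf] at hloc
    have hwv : wv G n v = n := if_pos hvi
    have hf2 : f.2 = v := by
      have : f ∈ G.inE v := by rw [hin]; simp
      rw [DiGraph.inE, Finset.mem_filter] at this; exact this.2
    have hd : d G n S1 S2 v = 2 * n
        - ((if e ∈ R G S1 S2 then n - 1 else 0)
          + ((if a ∈ R G S1 S2 then n - 1 else 0)
            + (if f ∈ R G S1 S2 then n + 1 else 0))) := by
      rw [d, hloc, hwv]
    have hex : f ∈ R G S1 S2 → ∃ u, G.Univalent u ∧ (u, v) ∈ R G S1 S2 := by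
      intro hfR
      refine ⟨f.1, hfu, ?_⟩
      have : (f.1, v) = f := by rw [← hf2]
      rw [this]; exact hfR
    refine ⟨?_, ?_, ?_⟩
    · rw [hd]; split_ifs <;> omega
    · intro hneg
      rw [hd] at hneg
      by_cases h1 : e ∈ R G S1 S2 <;> by_cases h2 : a ∈ R G S1 S2 <;>
        by_cases h3 : f ∈ R G S1 S2 <;> simp only [h1, h2, h3, if_true, if_false,
          if_pos, if_neg, not_false_iff] at hneg <;> try omega
      refine ⟨⟨?_, ?_⟩, hex h3⟩
      · rw [hout]; exact Finset.singleton_subset_iff.2 h1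
      · rw [hin]; exact Finset.insert_subset_iff.2 ⟨h2, Finset.singleton_subset_iff.2 h3⟩
    · intro hzero
      rw [hd] at hzero
      by_cases h3 : f ∈ R G S1 S2
      · exact Or.inr (hex h3)
      · exfalso
        rw [if_neg h3] at hzero
        by_cases h1 : e ∈ R G S1 S2 <;> by_cases h2 : a ∈ R G S1 S2 <;>
          simp only [h1, h2, if_true, if_false, if_pos, if_neg, not_false_iff] at hzero <;>
          omega
  · -- Cond3
    obtain ⟨hvi, ⟨e, hout, he⟩, hin⟩ := h
    rw [hout, hin, Finset.sum_singleton, Finset.sum_empty, we_of_Ee he] at hloc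
    have hwv : wv G n v = n := if_pos hvi
    have hd : d G n S1 S2 v = 2 * n - ((if e ∈ R G S1 S2 then n + 1 else 0) + 0) := by
      rw [d, hloc, hwv]
    refine ⟨?_, ?_, ?_⟩
    · rw [hd]; split_ifs <;> omega
    · intro hneg; rw [hd] at hneg; exfalso; revert hneg; split_ifs <;> omega
    · intro hzero; rw [hd] at hzero; exfalso; revert hzero; split_ifs <;> omega
  · -- Cond4
    obtain ⟨hvi, ⟨e, hout, he⟩, ⟨f, hin, hf⟩⟩ := h
    rw [hout, hin, Finset.sum_singleton, Finset.sum_singleton,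
      we_of_Ei he, we_of_Ee hf] at hloc
    have hwv : wv G n v = n := if_pos hvi
    have hd : d G n S1 S2 v = 2 * n
        - ((if e ∈ R G S1 S2 then n - 1 else 0) + (if f ∈ R G S1 S2 then n + 1 else 0)) := by
      rw [d, hloc, hwv]
    refine ⟨?_, ?_, ?_⟩
    · rw [hd]; split_ifs <;> omega
    · intro hneg; rw [hd] at hneg; exfalso; revert hneg; split_ifs <;> omega
    · intro hzero
      rw [hd] at hzero
      by_cases h1 : e ∈ R G S1 S2 <;> by_cases h2 : f ∈ R G S1 S2 <;>
        simp only [h1, h2, if_true, if_false, if_pos, if_neg, not_false_iff] at hzero <;>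
        try omega
      refine Or.inl ⟨?_, ?_⟩
      · rw [hout]; exact Finset.singleton_subset_iff.2 h1
      · rw [hin]; exact Finset.singleton_subset_iff.2 h2
  · -- Cond5
    obtain ⟨hvi, ⟨e, hout, he⟩, ⟨f, hin, hf⟩⟩ := h
    rw [hout, hin, Finset.sum_singleton, Finset.sum_singleton,
      we_of_Ee he, we_of_Ei hf] at hloc
    have hwv : wv G n v = n := if_pos hvi
    have hd : d G n S1 S2 v = 2 * n
        - ((if e ∈ R G S1 S2 then n + 1 else 0) + (if f ∈ R G S1 S2 then n - 1 else 0)) := by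
      rw [d, hloc, hwv]
    refine ⟨?_, ?_, ?_⟩
    · rw [hd]; split_ifs <;> omega
    · intro hneg; rw [hd] at hneg; exfalso; revert hneg; split_ifs <;> omega
    · intro hzero
      rw [hd] at hzero
      by_cases h1 : e ∈ R G S1 S2 <;> by_cases h2 : f ∈ R G S1 S2 <;>
        simp only [h1, h2, if_true, if_false, if_pos, if_neg, not_false_iff] at hzero <;>
        try omega
      refine Or.inl ⟨?_, ?_⟩
      · rw [hout]; exact Finset.singleton_subset_iff.2 h1
      · rw [hin]; exact Finset.singleton_subset_iff.2 h2

end BCRAux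
namespace BCRAux

open DiGraph

variable {V : Type*} [DecidableEq V] [Fintype V]

lemma localR_zero {G : DiGraph V} (n : ℤ) {S1 S2 : Finset V} {v : V}
    (hv : v ∉ S1 ∪ S2) : localR G n S1 S2 v = 0 := by
  rw [localR]
  have h1 : (R G S1 S2).filter (fun e => e.1 = v) = ∅ := by
    rw [Finset.filter_eq_empty_iff]
    intro e he hev
    exact hv (hev ▸ (endpoints_mem he).1)
  have h2 : (R G S1 S2).filter (fun e => e.2 = v) = ∅ := by
    rw [Finset.filter_eq_empty_iff]
    intro e he hev
    exact hv (hev ▸ (endpoints_mem he).2)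
  rw [h1, h2]; simp

lemma sum_d_eq {G : DiGraph V} (n : ℤ) (S1 S2 : Finset V) :
    ∑ v ∈ S1 ∪ S2, d G n S1 S2 v
      = 2 * (∑ v ∈ S1 ∪ S2, wv G n v) - 2 * ∑ e ∈ R G S1 S2, we G n e := by
  have h1 : ∑ v ∈ S1 ∪ S2, localR G n S1 S2 v = ∑ v : V, localR G n S1 S2 v :=
    Finset.sum_subset (Finset.subset_univ (S1 ∪ S2))
      (fun v _ hv => localR_zero (G := G) n hv)
  have h2 : ∑ v : V, localR G n S1 S2 v = 2 * ∑ e ∈ R G S1 S2, we G n e :=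
    (double_sum _ _).symm
  simp only [d, Finset.sum_sub_distrib, ← Finset.mul_sum, h1, h2]

/-- Core inequality and strictness. -/
lemma core {G : DiGraph V} (hG : G.IsBCR) {n : ℤ} (hn : 3 ≤ n)
    {S1 S2 : Finset V} (hdisj : Disjoint S1 S2) (hproper : S1 ∪ S2 ≠ Finset.univ) :
    0 ≤ ∑ v ∈ S1 ∪ S2, d G n S1 S2 v
    ∧ (∑ v ∈ S1 ∪ S2, d G n S1 S2 v = 0 → S1 = ∅ ∧ S2 = ∅) := by
  classical
  set S : Finset V := S1 ∪ S2 with hS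
  set D : Finset V := S.filter (fun v => d G n S1 S2 v < 0) with hD
  set U : Finset V := S.filter
    (fun u => G.Univalent u ∧ ∃ w, (u, w) ∈ R G S1 S2) with hU
  -- facts about U
  have hUfact : ∀ u ∈ U, d G n S1 S2 u = n - 1
      ∧ G.outE u ⊆ R G S1 S2 ∧ G.inE u ⊆ R G S1 S2 := by
    intro u hu
    rw [hU, Finset.mem_filter] at hu
    obtain ⟨huS, huni, w, hw⟩ := hu
    obtain ⟨hVi, e, hout, hee, hin⟩ := univalent_struct hG huni
    have hewR : (u, w) ∈ G.outE u := mem_outE_of_R hw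
    rw [hout, Finset.mem_singleton] at hewR
    have heR : e ∈ R G S1 S2 := hewR ▸ hw
    have hloc := localR_eq G n S1 S2 u
    rw [hout, hin, Finset.sum_singleton, Finset.sum_empty, if_pos heR,
      we_of_Ee hee] at hloc
    refine ⟨?_, ?_, ?_⟩
    · rw [d, hloc, wv, if_pos hVi]; ring
    · rw [hout]; exact Finset.singleton_subset_iff.2 heR
    · rw [hin]; exact Finset.empty_subset _
  have hUD : ∀ u ∈ U, u ∉ D := by
    intro u hu hmem
    rw [hD, Finset.mem_filter] at hmem
    have := (hUfact u hu).1
    omega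
  -- the injection from D to U
  set ψ : V → V := fun v =>
    if h : ∃ u, G.Univalent u ∧ (u, v) ∈ R G S1 S2 then h.choose else v with hψ
  have hψspec : ∀ v ∈ D, G.Univalent (ψ v) ∧ (ψ v, v) ∈ R G S1 S2 := by
    intro v hv
    rw [hD, Finset.mem_filter] at hv
    have hex := ((vert_bounds hG hn S1 S2 v).2.1 hv.2).2
    rw [hψ]; simp only [dif_pos hex]
    exact hex.choose_spec
  have hψU : ∀ v ∈ D, ψ v ∈ U := by
    intro v hv
    obtain ⟨huni, hR⟩ := hψspec v hv
    rw [hU, Finset.mem_filter]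
    exact ⟨(endpoints_mem hR).1, huni, v, hR⟩
  have hψinj : Set.InjOn ψ D := by
    intro v1 hv1 v2 hv2 heq
    obtain ⟨hu1, hR1⟩ := hψspec v1 hv1
    obtain ⟨hu2, hR2⟩ := hψspec v2 hv2
    rw [heq] at hR1
    obtain ⟨e, hout⟩ := out_singleton hG (ψ v2)
    have m1 : (ψ v2, v1) ∈ G.outE (ψ v2) := mem_outE_of_R hR1
    have m2 : (ψ v2, v2) ∈ G.outE (ψ v2) := mem_outE_of_R hR2
    rw [hout, Finset.mem_singleton] at m1 m2
    have := m1.trans m2.symm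
    exact (Prod.mk.injEq _ _ _ _ ▸ this).2
  have hcard : D.card ≤ U.card :=
    Finset.card_le_card_of_injOn ψ hψU hψinj
  -- sum decomposition
  set T : Finset V := S.filter (fun v => ¬ d G n S1 S2 v < 0) with hT
  have hDT : ∑ v ∈ D, d G n S1 S2 v + ∑ v ∈ T, d G n S1 S2 v
      = ∑ v ∈ S, d G n S1 S2 v := Finset.sum_filter_add_sum_filter_not S _ _
  have hUT : U ⊆ T := by
    intro u hu
    rw [hT, Finset.mem_filter]
    have := (hUfact u hu).1
    have huS : u ∈ S := (Finset.mem_filter.1 hu).1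
    constructor
    · exact huS
    · omega
  have hTU : ∑ v ∈ T \ U, d G n S1 S2 v + ∑ v ∈ U, d G n S1 S2 v
      = ∑ v ∈ T, d G n S1 S2 v := Finset.sum_sdiff hUT
  have hUsum : ∑ v ∈ U, d G n S1 S2 v = (n - 1) * U.card := by
    rw [Finset.sum_congr rfl (fun u hu => (hUfact u hu).1), Finset.sum_const,
      nsmul_eq_mul, mul_comm]
  have hDsum : -(n - 1) * D.card ≤ ∑ v ∈ D, d G n S1 S2 v := by
    calc -(n - 1) * D.card = ∑ _v ∈ D, -(n - 1) := by
          rw [Finset.sum_const, nsmul_eq_mul, mul_comm]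
      _ ≤ _ := Finset.sum_le_sum (fun v _ => (vert_bounds hG hn S1 S2 v).1)
  have hTUnn : 0 ≤ ∑ v ∈ T \ U, d G n S1 S2 v := by
    apply Finset.sum_nonneg
    intro v hv
    have := (Finset.mem_filter.1 (Finset.mem_sdiff.1 hv).1).2
    omega
  have hcard' : (D.card : ℤ) ≤ (U.card : ℤ) := by exact_mod_cast hcard
  have hns : (0 : ℤ) ≤ (n - 1) * ((U.card : ℤ) - D.card) := by
    apply mul_nonneg <;> omega
  constructor
  · nlinarith [hDsum, hUsum, hTUnn, hDT, hTU, hns]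
  · intro hzero
    -- tightness
    have hTUzero : ∑ v ∈ T \ U, d G n S1 S2 v = 0 := by nlinarith
    have hcardeq : (U.card : ℤ) = D.card := by nlinarith
    have hTUall : ∀ v ∈ T \ U, d G n S1 S2 v = 0 := by
      intro v hv
      have h1 := (Finset.sum_eq_zero_iff_of_nonneg (fun v hv => by
        have := (Finset.mem_filter.1 (Finset.mem_sdiff.1 hv).1).2
        omega)).1 hTUzero
      exact h1 v hv
    -- the image of ψ is all of U
    have himg : D.image ψ = U := by
      apply Finset.eq_of_subset_of_card_le
      · intro u hu
        obtain ⟨v, hv, rfl⟩ := Finset.mem_image.1 hu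
        exact hψU v hv
      · rw [Finset.card_image_of_injOn hψinj]
        omega
    -- every vertex of S has all incident edges removed
    have hfully : ∀ v ∈ S, G.outE v ⊆ R G S1 S2 ∧ G.inE v ⊆ R G S1 S2 := by
      intro v hvS
      by_cases hvD : v ∈ D
      · exact ((vert_bounds hG hn S1 S2 v).2.1 (Finset.mem_filter.1 hvD).2).1
      · by_cases hvU : v ∈ U
        · exact (hUfact v hvU).2
        · have hvT : v ∈ T := by
            rw [hT, Finset.mem_filter]
            refine ⟨hvS, ?_⟩
            intro hneg
            exact hvD (Finset.mem_filter.2 ⟨hvS, hneg⟩)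
          have hv0 : d G n S1 S2 v = 0 :=
            hTUall v (Finset.mem_sdiff.2 ⟨hvT, hvU⟩)
          rcases (vert_bounds hG hn S1 S2 v).2.2 hv0 with hful | ⟨u, huni, huR⟩
          · exact hful
          · exfalso
            have huU : u ∈ U := by
              rw [hU, Finset.mem_filter]
              exact ⟨(endpoints_mem huR).1, huni, v, huR⟩
            rw [← himg] at huU
            obtain ⟨w, hwD, hwu⟩ := Finset.mem_image.1 huU
            obtain ⟨-, hwR⟩ := hψspec w hwD
            rw [hwu] at hwR
            obtain ⟨e, hout⟩ := out_singleton hG u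
            have m1 : (u, v) ∈ G.outE u := mem_outE_of_R huR
            have m2 : (u, w) ∈ G.outE u := mem_outE_of_R hwR
            rw [hout, Finset.mem_singleton] at m1 m2
            have : v = w := by
              have := m1.trans m2.symm
              exact (Prod.mk.injEq _ _ _ _ ▸ this).2
            rw [this] at hvD
            exact hvD hwD
    -- closure of S1 and S2 under adjacency
    have hclosed1 : ∀ v ∈ S1, ∀ w, G.Adj v w → w ∈ S1 := by
      intro v hv w hadj
      have hvS : v ∈ S := Finset.mem_union_left _ hv
      have hvnS2 : v ∉ S2 := fun h => (Finset.disjoint_left.1 hdisj hv) h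
      rcases hadj with hE | hE
      · have : (v, w) ∈ G.outE v := by simp [DiGraph.outE, hE]
        have hR := (hfully v hvS).1 this
        rw [R, Finset.mem_filter] at hR
        rcases hR.2 with ⟨h1, h2⟩ | ⟨h1, h2⟩
        · exact h2
        · exact absurd h1 hvnS2
      · have : (w, v) ∈ G.inE v := by simp [DiGraph.inE, hE]
        have hR := (hfully v hvS).2 this
        rw [R, Finset.mem_filter] at hR
        rcases hR.2 with ⟨h1, h2⟩ | ⟨h1, h2⟩
        · exact h1
        · exact absurd h2 hvnS2
    have hclosed2 : ∀ v ∈ S2, ∀ w, G.Adj v w → w ∈ S2 := by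
      intro v hv w hadj
      have hvS : v ∈ S := Finset.mem_union_right _ hv
      have hvnS1 : v ∉ S1 := fun h => (Finset.disjoint_left.1 hdisj h) hv
      rcases hadj with hE | hE
      · have : (v, w) ∈ G.outE v := by simp [DiGraph.outE, hE]
        have hR := (hfully v hvS).1 this
        rw [R, Finset.mem_filter] at hR
        rcases hR.2 with ⟨h1, h2⟩ | ⟨h1, h2⟩
        · exact absurd h1 hvnS1
        · exact h2
      · have : (w, v) ∈ G.inE v := by simp [DiGraph.inE, hE]
        have hR := (hfully v hvS).2 this
        rw [R, Finset.mem_filter] at hR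
        rcases hR.2 with ⟨h1, h2⟩ | ⟨h1, h2⟩
        · exact absurd h2 hvnS1
        · exact h1
    constructor
    · by_contra h1
      obtain ⟨v, hv⟩ := Finset.nonempty_iff_ne_empty.2 h1
      apply hproper
      apply Finset.eq_univ_iff_forall.2
      intro w
      have hreach := hG.2.2.1 v w
      have : w ∈ S1 := by
        induction hreach with
        | refl => exact hv
        | tail _ hadj ih => exact hclosed1 _ ih _ hadj
      exact Finset.mem_union_left _ this
    · by_contra h2
      obtain ⟨v, hv⟩ := Finset.nonempty_iff_ne_empty.2 h2
      apply hproper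
      apply Finset.eq_univ_iff_forall.2
      intro w
      have hreach := hG.2.2.1 v w
      have : w ∈ S2 := by
        induction hreach with
        | refl => exact hv
        | tail _ hadj ih => exact hclosed2 _ ih _ hadj
      exact Finset.mem_union_right _ this

end BCRAux


/-- For odd `n ≥ 3`, a BCR diagram `Γ`, and disjoint subsets `S1`, `S2` of
the vertices with `S1 ∪ S2 ≠ V(Γ)`, letting `E'` be the set of edges not
having both endpoints in `S1` and not having both endpoints in `S2`, one has
`n·|V_i ∖ (S1 ∪ S2)| + (n+2)·|V_e ∖ (S1 ∪ S2)|
  ≤ (n-1)·|E' ∩ E_i| + (n+1)·|E' ∩ E_e|`,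
with equality if and only if `S1 = ∅` and `S2 = ∅`. -/
theorem bcr_blown_up_dimension_inequality {V : Type*} [DecidableEq V] [Fintype V]
    (G : DiGraph V) (hG : G.IsBCR) (n : ℕ) (hn : 3 ≤ n) (hodd : Odd n)
    (S1 S2 : Finset V) (hdisj : Disjoint S1 S2)
    (hproper : S1 ∪ S2 ≠ Finset.univ) :
    n * (G.Vi \ (S1 ∪ S2)).card + (n + 2) * (G.Ve \ (S1 ∪ S2)).card
      ≤ (n - 1) * ((G.E.filter fun e =>
            ¬(e.1 ∈ S1 ∧ e.2 ∈ S1) ∧ ¬(e.1 ∈ S2 ∧ e.2 ∈ S2)) ∩ G.Ei).card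
        + (n + 1) * ((G.E.filter fun e =>
            ¬(e.1 ∈ S1 ∧ e.2 ∈ S1) ∧ ¬(e.1 ∈ S2 ∧ e.2 ∈ S2)) ∩ G.Ee).card ∧
    (n * (G.Vi \ (S1 ∪ S2)).card + (n + 2) * (G.Ve \ (S1 ∪ S2)).card
      = (n - 1) * ((G.E.filter fun e =>
            ¬(e.1 ∈ S1 ∧ e.2 ∈ S1) ∧ ¬(e.1 ∈ S2 ∧ e.2 ∈ S2)) ∩ G.Ei).card
        + (n + 1) * ((G.E.filter fun e =>
            ¬(e.1 ∈ S1 ∧ e.2 ∈ S1) ∧ ¬(e.1 ∈ S2 ∧ e.2 ∈ S2)) ∩ G.Ee).card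
      ↔ S1 = ∅ ∧ S2 = ∅) := by
  classical
  open BCRAux in
  have hnZ : (3 : ℤ) ≤ (n : ℤ) := by exact_mod_cast hn
  have h1n : 1 ≤ n := by omega
  set m : ℤ := (n : ℤ) with hm
  set S : Finset V := S1 ∪ S2 with hS
  set F : Finset (V × V) := G.E.filter (fun e =>
    ¬(e.1 ∈ S1 ∧ e.2 ∈ S1) ∧ ¬(e.1 ∈ S2 ∧ e.2 ∈ S2)) with hF
  -- F is the complement of R inside E
  have hFR : F = G.E \ R G S1 S2 := by
    ext e
    simp only [hF, R, Finset.mem_filter, Finset.mem_sdiff]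
    tauto
  have hRE : R G S1 S2 ⊆ G.E := Finset.filter_subset _ _
  have hsumF : ∑ e ∈ F, we G m e
      = ∑ e ∈ G.E, we G m e - ∑ e ∈ R G S1 S2, we G m e := by
    rw [hFR, Finset.sum_sdiff_eq_sub hRE]
  -- the right-hand side as a weighted sum
  have hFE : F ⊆ G.E := Finset.filter_subset _ _
  have hsplitF : (F ∩ G.Ei) ∪ (F ∩ G.Ee) = F := by
    ext e
    simp only [Finset.mem_union, Finset.mem_inter, DiGraph.Ee, Finset.mem_sdiff]
    constructor
    · tauto
    · intro he
      have heE : e ∈ G.E := hFE he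
      by_cases h : e ∈ G.Ei <;> tauto
  have hdisjF : Disjoint (F ∩ G.Ei) (F ∩ G.Ee) := by
    apply Finset.disjoint_left.2
    intro e he1 he2
    have h1 := (Finset.mem_inter.1 he1).2
    have h2 := (Finset.mem_inter.1 he2).2
    rw [DiGraph.Ee, Finset.mem_sdiff] at h2
    exact h2.2 h1
  have hRHS : (m - 1) * ((F ∩ G.Ei).card : ℤ) + (m + 1) * ((F ∩ G.Ee).card : ℤ)
      = ∑ e ∈ F, we G m e := by
    have hsum2 : ∑ e ∈ F, we G m e
        = ∑ e ∈ F ∩ G.Ei, we G m e + ∑ e ∈ F ∩ G.Ee, we G m e := by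
      rw [← Finset.sum_union hdisjF, hsplitF]
    have e1 : ∑ e ∈ F ∩ G.Ei, we G m e = (m - 1) * ((F ∩ G.Ei).card : ℤ) := by
      rw [Finset.sum_congr rfl (fun e he => we_of_Ei (Finset.mem_inter.1 he).2),
        Finset.sum_const, nsmul_eq_mul, mul_comm]
    have e2 : ∑ e ∈ F ∩ G.Ee, we G m e = (m + 1) * ((F ∩ G.Ee).card : ℤ) := by
      rw [Finset.sum_congr rfl (fun e he => we_of_Ee (Finset.mem_inter.1 he).2),
        Finset.sum_const, nsmul_eq_mul, mul_comm]
    rw [hsum2, e1, e2]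
  -- the left-hand side as a weighted sum
  have hsplitV : (G.Vi \ S) ∪ (G.Ve \ S) = Finset.univ \ S := by
    ext v
    simp only [Finset.mem_union, Finset.mem_sdiff, DiGraph.Ve, Finset.mem_compl,
      Finset.mem_univ, true_and]
    tauto
  have hdisjV : Disjoint (G.Vi \ S) (G.Ve \ S) := by
    apply Finset.disjoint_left.2
    intro v hv1 hv2
    rw [Finset.mem_sdiff] at hv1 hv2
    rw [DiGraph.Ve, Finset.mem_compl] at hv2
    exact hv2.1 hv1.1
  have hLHS : m * ((G.Vi \ S).card : ℤ) + (m + 2) * ((G.Ve \ S).card : ℤ)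
      = ∑ v ∈ Finset.univ \ S, wv G m v := by
    have hsum2 : ∑ v ∈ Finset.univ \ S, wv G m v
        = ∑ v ∈ G.Vi \ S, wv G m v + ∑ v ∈ G.Ve \ S, wv G m v := by
      rw [← Finset.sum_union hdisjV, hsplitV]
    have e1 : ∑ v ∈ G.Vi \ S, wv G m v = m * ((G.Vi \ S).card : ℤ) := by
      rw [Finset.sum_congr rfl (fun v hv => ?_), Finset.sum_const, nsmul_eq_mul, mul_comm]
      exact if_pos (Finset.mem_sdiff.1 hv).1
    have e2 : ∑ v ∈ G.Ve \ S, wv G m v = (m + 2) * ((G.Ve \ S).card : ℤ) := by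
      rw [Finset.sum_congr rfl (fun v hv => ?_), Finset.sum_const, nsmul_eq_mul, mul_comm]
      have := (Finset.mem_sdiff.1 hv).1
      rw [DiGraph.Ve, Finset.mem_compl] at this
      exact if_neg this
    rw [hsum2, e1, e2]
  have hsubS : ∑ v ∈ Finset.univ \ S, wv G m v
      = ∑ v : V, wv G m v - ∑ v ∈ S, wv G m v :=
    Finset.sum_sdiff_eq_sub (Finset.subset_univ S)
  have hbase : ∑ e ∈ G.E, we G m e = ∑ v : V, wv G m v := base hG m
  have hdsum : ∑ v ∈ S, d G m S1 S2 v
      = 2 * (∑ v ∈ S, wv G m v) - 2 * ∑ e ∈ R G S1 S2, we G m e := sum_d_eq m S1 S2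
  have hcore := core hG hnZ hdisj hproper
  -- the key inequality in ℤ
  have hkey : m * ((G.Vi \ S).card : ℤ) + (m + 2) * ((G.Ve \ S).card : ℤ)
      ≤ (m - 1) * ((F ∩ G.Ei).card : ℤ) + (m + 1) * ((F ∩ G.Ee).card : ℤ) := by
    rw [hLHS, hRHS, hsubS, hsumF, hbase]
    linarith [hcore.1, hdsum]
  constructor
  · -- the inequality, in ℕ
    rw [← Nat.cast_le (α := ℤ)]
    push_cast [Nat.cast_sub h1n]
    convert hkey using 2 <;> push_cast <;> ring
  · constructor
    · -- equality implies S1 = S2 = ∅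
      intro heq
      apply hcore.2
      have heqZ : m * ((G.Vi \ S).card : ℤ) + (m + 2) * ((G.Ve \ S).card : ℤ)
          = (m - 1) * ((F ∩ G.Ei).card : ℤ) + (m + 1) * ((F ∩ G.Ee).card : ℤ) := by
        have := congrArg (fun k : ℕ => (k : ℤ)) heq
        push_cast [Nat.cast_sub h1n] at this
        convert this using 2 <;> push_cast <;> ring
      rw [hLHS, hRHS, hsubS, hsumF, hbase] at heqZ
      linarith [hdsum]
    · -- S1 = S2 = ∅ implies equality
      rintro ⟨rfl, rfl⟩
      have hFeq : F = G.E := by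
        rw [hF]
        apply Finset.filter_true_of_mem
        intro e _
        simp
      have hZeq : m * ((G.Vi \ S).card : ℤ) + (m + 2) * ((G.Ve \ S).card : ℤ)
          = (m - 1) * ((F ∩ G.Ei).card : ℤ) + (m + 1) * ((F ∩ G.Ee).card : ℤ) := by
        rw [hLHS, hRHS, hsubS, hFeq, hbase]
        have hSempty : S = (∅ : Finset V) := by simp [hS]
        rw [hSempty]
        simp
      rw [← Nat.cast_inj (R := ℤ)]
      push_cast [Nat.cast_sub h1n]
      convert hZeq using 2 <;> push_cast <;> ring
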